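/- arXiv:2311.12013 — 4 statements merged into one kernel-verified Lean document; each statement's English description precedes it below -/
import Mathlib

section
/- Let x ≥ 0, Γ ≥ 0 and 0 ≤ γ < 1 be real numbers such that x ≤ Γ(1 + x^γ). Then x ≤ 2^(1/(1-γ)) (Γ + Γ^(1/(1-γ))). -/
theorem stmt0 (x Γ γ : ℝ) (hx : 0 ≤ x) (hΓ : 0 ≤ Γ) (hγ0 : 0 ≤ γ) (hγ1 : γ < 1)
    (h : x ≤ Γ * (1 + x ^ γ)) :
    x ≤ 2 ^ (1 / (1 - γ)) * (Γ + Γ ^ (1 / (1 - γ))) := by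
  set p : ℝ := 1 / (1 - γ) with hp
  have h1γ : 0 < 1 - γ := by linarith
  have hp1 : 1 ≤ p := by
    rw [hp, le_div_iff₀ h1γ]; linarith
  have hp0 : 0 ≤ p := le_trans zero_le_one hp1
  have h2p : (2 : ℝ) ≤ 2 ^ p := by
    calc (2 : ℝ) = 2 ^ (1 : ℝ) := (Real.rpow_one 2).symm
    _ ≤ 2 ^ p := Real.rpow_le_rpow_of_exponent_le one_le_two hp1
  have hΓp : 0 ≤ Γ ^ p := Real.rpow_nonneg hΓ p
  have h2p0 : (0:ℝ) ≤ 2 ^ p := by linarith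
  rcases le_or_gt x 1 with hx1 | hx1
  · have hxγ : x ^ γ ≤ 1 := Real.rpow_le_one hx hx1 hγ0
    have : x ≤ 2 * Γ := by nlinarith
    calc x ≤ 2 * Γ := this
    _ ≤ 2 ^ p * Γ := by nlinarith
    _ ≤ 2 ^ p * (Γ + Γ ^ p) := by nlinarith
  · have hx0 : 0 < x := lt_trans zero_lt_one hx1
    have hxγ1 : 1 ≤ x ^ γ := by
      calc (1:ℝ) = x ^ (0:ℝ) := (Real.rpow_zero x).symm
      _ ≤ x ^ γ := Real.rpow_le_rpow_of_exponent_le hx1.le hγ0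
    have hxγ0 : 0 < x ^ γ := lt_of_lt_of_le zero_lt_one hxγ1
    have key : x ^ (1 - γ) ≤ 2 * Γ := by
      have hsplit : x ^ (1 - γ) * x ^ γ = x := by
        rw [← Real.rpow_add hx0]; simp
      have hle : x ≤ 2 * Γ * x ^ γ := by nlinarith
      have := (div_le_iff₀ hxγ0).mpr hle
      calc x ^ (1 - γ) = x / x ^ γ := by
            rw [eq_div_iff hxγ0.ne']; exact hsplit
      _ ≤ 2 * Γ := this
    have h2Γ0 : 0 ≤ x ^ (1 - γ) := Real.rpow_nonneg hx _
    have hmain : x ≤ (2 * Γ) ^ p := by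
      have hmono := Real.rpow_le_rpow h2Γ0 key hp0
      have hexp : (x ^ (1 - γ)) ^ p = x := by
        rw [← Real.rpow_mul hx, hp, mul_one_div, div_self h1γ.ne', Real.rpow_one]
      rwa [hexp] at hmono
    calc x ≤ (2 * Γ) ^ p := hmain
    _ = 2 ^ p * Γ ^ p := Real.mul_rpow (by norm_num) hΓ
    _ ≤ 2 ^ p * (Γ + Γ ^ p) := by nlinarith
end

section
/- Let α, β > 0 and γ ∈ (0,1) satisfy αγ + β(1-γ) > 1-γ. Suppose X : [0,1] → ℝ is continuous with X(0) = 0, f : [0,1] → ℝ is γ-Hölder continuous with f(0) = 0, the function t ↦ |X(t)|^(−α) 1_{0<|X(t)|<1} t^(−β) + 1_{X(t)=0, t>0} t^(−2) is Lebesgue integrable on [0,1], and X(t) = −∫₀ᵗ (sign(X(s))|X(s)|^(−α) 1_{0<|X(s)|<1} s^(−β) + 1_{X(s)=0, s>0} s^(−2)) ds + f(t) for all t ∈ [0,1]. Then a contradiction follows; i.e., no such continuous X exists. -/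
open MeasureTheory Set


lemma measurable_real_sign : Measurable Real.sign := by
  unfold Real.sign
  exact Measurable.ite (measurableSet_lt measurable_id measurable_const) measurable_const
    (Measurable.ite (measurableSet_lt measurable_const measurable_id) measurable_const
      measurable_const)

lemma excursion_lemma (X : ℝ → ℝ) (hXc : ContinuousOn X (Set.Icc 0 1)) (hX0 : X 0 = 0)
    {t : ℝ} (ht0 : 0 < t) (ht1 : t ≤ 1) (hXt : X t ≠ 0) :
    ∃ u σ : ℝ, 0 ≤ u ∧ u < t ∧ X u = 0 ∧ (σ = 1 ∨ σ = -1) ∧ σ * X t = |X t| ∧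
      ∀ s ∈ Set.Ioc u t, X s ≠ 0 ∧ Real.sign (X s) = σ := by
  have hsub : Icc (0:ℝ) t ⊆ Icc 0 1 := Icc_subset_Icc le_rfl ht1
  have hXct : ContinuousOn X (Icc 0 t) := hXc.mono hsub
  set Z : Set ℝ := Icc 0 t ∩ X ⁻¹' {0} with hZ
  have hZclosed : IsClosed Z := hXct.preimage_isClosed_of_isClosed isClosed_Icc isClosed_singleton
  have hZcomp : IsCompact Z :=
    isCompact_Icc.of_isClosed_subset hZclosed inter_subset_left
  have h0Z : (0:ℝ) ∈ Z := ⟨⟨le_rfl, ht0.le⟩, by simp [hX0]⟩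
  set u := sSup Z with hu_def
  have huZ : u ∈ Z := hZcomp.sSup_mem ⟨0, h0Z⟩
  have hu0 : 0 ≤ u := huZ.1.1
  have hut : u ≤ t := huZ.1.2
  have hXu : X u = 0 := huZ.2
  have hunet : u ≠ t := fun h => hXt (h ▸ hXu)
  have hult : u < t := lt_of_le_of_ne hut hunet
  have hnz : ∀ s ∈ Ioc u t, X s ≠ 0 := by
    intro s hs hXs
    have hsZ : s ∈ Z := ⟨⟨hu0.trans hs.1.le, hs.2⟩, hXs⟩
    have : s ≤ u := le_csSup hZcomp.bddAbove hsZ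
    exact absurd hs.1 (not_lt.mpr this)
  have hsame : ∀ s ∈ Ioc u t, Real.sign (X s) = Real.sign (X t) := by
    intro s hs
    rcases hXt.lt_or_gt with hneg | hpos
    · -- X t < 0, claim X s < 0
      have : X s < 0 := by
        by_contra hle
        have hXs : 0 < X s := lt_of_le_of_ne (not_lt.mp hle) (Ne.symm (hnz s hs))
        have hst : s ≤ t := hs.2
        have hcont : ContinuousOn X (Icc s t) := hXct.mono (Icc_subset_Icc (hu0.trans hs.1.le) le_rfl)
        have h0mem : (0:ℝ) ∈ Icc (X t) (X s) := ⟨hneg.le, hXs.le⟩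
        obtain ⟨c, hc, hXcz⟩ := intermediate_value_Icc' hst hcont h0mem
        exact hnz c ⟨lt_of_lt_of_le hs.1 hc.1, hc.2⟩ hXcz
      rw [Real.sign_of_neg this, Real.sign_of_neg hneg]
    · have : 0 < X s := by
        by_contra hle
        have hXs : X s < 0 := lt_of_le_of_ne (not_lt.mp hle) (hnz s hs)
        have hst : s ≤ t := hs.2
        have hcont : ContinuousOn X (Icc s t) := hXct.mono (Icc_subset_Icc (hu0.trans hs.1.le) le_rfl)
        have h0mem : (0:ℝ) ∈ Icc (X s) (X t) := ⟨hXs.le, hpos.le⟩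
        obtain ⟨c, hc, hXcz⟩ := intermediate_value_Icc hst hcont h0mem
        exact hnz c ⟨lt_of_lt_of_le hs.1 hc.1, hc.2⟩ hXcz
      rw [Real.sign_of_pos this, Real.sign_of_pos hpos]
  refine ⟨u, Real.sign (X t), hu0, hult, hXu, ?_, ?_, fun s hs => ⟨hnz s hs, hsame s hs⟩⟩
  · rcases hXt.lt_or_gt with hneg | hpos
    · right; rw [Real.sign_of_neg hneg]
    · left; rw [Real.sign_of_pos hpos]
  · rcases hXt.lt_or_gt with hneg | hpos
    · rw [Real.sign_of_neg hneg, abs_of_neg hneg]; ring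
    · rw [Real.sign_of_pos hpos, abs_of_pos hpos]; ring


lemma reach_lemma (α β γ : ℝ) (hα : 0 < α) (hβ : 0 < β) (hγ0 : 0 < γ) (hγ1 : γ < 1)
    (hcond : α * γ + β * (1 - γ) > 1 - γ)
    (P : ℝ → Prop) (h0 : P 0)
    (hstep : ∀ l, 0 ≤ l → P l → P (γ * (α * l + β) / (1 - γ))) :
    ∃ l, 0 ≤ l ∧ P l ∧ 1 < α * l + β := by
  have h1γ : 0 < 1 - γ := by linarith
  set q : ℝ := α * γ / (1 - γ) with hq_def
  set δ : ℝ := γ * β / (1 - γ) with hδ_def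
  have hq0 : 0 ≤ q := by positivity
  have hδ0 : 0 < δ := by positivity
  set lam : ℕ → ℝ := fun n => Nat.rec (0:ℝ) (fun _ l => γ * (α * l + β) / (1 - γ)) n with hlam
  have hrec : ∀ n, lam (n + 1) = q * lam n + δ := by
    intro n
    show γ * (α * lam n + β) / (1 - γ) = q * lam n + δ
    rw [hq_def, hδ_def]; field_simp
  have hnn : ∀ n, 0 ≤ lam n := by
    intro n; induction n with
    | zero => exact le_rfl
    | succ n ih => rw [hrec]; positivity
  have hP : ∀ n, P (lam n) := by
    intro n; induction n with
    | zero => exact h0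
    | succ n ih => exact hstep _ (hnn n) ih
  suffices hgoal : ∃ n, 1 < α * lam n + β by
    obtain ⟨n, hn⟩ := hgoal
    exact ⟨lam n, hnn n, hP n, hn⟩
  by_cases hq1 : 1 ≤ q
  · have hlow : ∀ n : ℕ, (n : ℝ) * δ ≤ lam n := by
      intro n; induction n with
      | zero => rw [show lam 0 = 0 from rfl]; simp
      | succ n ih =>
        rw [hrec]
        have : lam n ≤ q * lam n := le_mul_of_one_le_left (hnn n) hq1
        push_cast
        nlinarith
    obtain ⟨n, hn⟩ := exists_nat_gt ((1 - β) / α / δ)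
    refine ⟨n, ?_⟩
    have h1 : (1 - β) / α < n * δ := by
      rw [div_lt_iff₀ hδ0] at hn; linarith
    have h2 : (1 - β) / α < lam n := lt_of_lt_of_le h1 (hlow n)
    have := (div_lt_iff₀ hα).mp h2
    linarith [this]
  · push_neg at hq1
    have h1q : 0 < 1 - q := by linarith
    set L : ℝ := δ / (1 - q) with hL_def
    have hL0 : 0 < L := by positivity
    have hLfix : q * L + δ = L := by
      rw [hL_def]; field_simp; ring
    have hform : ∀ n, lam n = L * (1 - q ^ n) := by
      intro n; induction n with
      | zero => rw [show lam 0 = 0 from rfl]; simp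
      | succ n ih => rw [hrec, ih, pow_succ]; nlinarith [hLfix]
    have hkey : 1 < α * L + β := by
      -- (1-β)(1-q) < α δ, from hcond
      have hq1γ : q * (1 - γ) = α * γ := by rw [hq_def]; field_simp
      have hδ1γ : δ * (1 - γ) = γ * β := by rw [hδ_def]; field_simp
      rw [hL_def]
      rw [show α * (δ / (1 - q)) + β = (α * δ + β * (1 - q)) / (1 - q) by field_simp]
      rw [lt_div_iff₀ h1q]
      -- goal : 1 * (1 - q) < α * δ + β * (1 - q)
      -- multiply through by (1-γ) conceptually; use nlinarith
      nlinarith [mul_pos h1q h1γ, hq1γ, hδ1γ, hcond, mul_pos hγ0 hβ]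
    have hA : 0 < α * L + β - 1 := by linarith
    obtain ⟨n, hn⟩ := exists_pow_lt_of_lt_one (show (0:ℝ) < (α * L + β - 1) / (α * L) by positivity) hq1
    refine ⟨n, ?_⟩
    rw [hform n]
    have hq' : q ^ n * (α * L) < α * L + β - 1 := by
      rw [lt_div_iff₀ (by positivity : (0:ℝ) < α * L)] at hn
      linarith [hn]
    nlinarith

set_option maxHeartbeats 1000000 in
lemma step_lemma (α β γ K' : ℝ) (hα : 0 < α) (hβ : 0 < β) (hγ0 : 0 < γ) (hγ1 : γ < 1) (hK' : 0 < K')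
    (X f : ℝ → ℝ) (hXc : ContinuousOn X (Set.Icc 0 1)) (hX0 : X 0 = 0)
    (hfH : ∀ s ∈ Set.Icc (0:ℝ) 1, ∀ t ∈ Set.Icc (0:ℝ) 1, |f t - f s| ≤ K' * |t - s| ^ γ)
    (g : ℝ → ℝ)
    (hg_def : ∀ s, g s = Real.sign (X s) * |X s| ^ (-α) *
        (if 0 < |X s| ∧ |X s| < 1 then (1:ℝ) else 0) * s ^ (-β)
        + (if X s = 0 ∧ 0 < s then s ^ (-2:ℝ) else 0))
    (hgi : IntegrableOn g (Set.Icc 0 1))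
    (hIg : ∀ t ∈ Set.Icc (0:ℝ) 1, (∫ s in (0:ℝ)..t, g s) = f t - X t)
    (ε : ℝ) (hε0 : 0 < ε) (hε1 : ε ≤ 1) (hhalf : ∀ s ∈ Set.Icc (0:ℝ) ε, |X s| ≤ 1/2)
    (C l : ℝ) (hC : 0 < C) (hl : 0 ≤ l)
    (hb : ∀ s ∈ Set.Ioc (0:ℝ) ε, |X s| ≤ C * s ^ l) :
    ∀ t ∈ Set.Ioc (0:ℝ) ε,
      |X t| ≤ (K' * (K' * C ^ α) ^ (γ / (1 - γ))) * t ^ (γ * (α * l + β) / (1 - γ)) := by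
  intro t ht
  have ht0 : 0 < t := ht.1
  have htε : t ≤ ε := ht.2
  have ht1 : t ≤ 1 := htε.trans hε1
  have h1γ : 0 < 1 - γ := by linarith
  by_cases hXt : X t = 0
  · rw [hXt, abs_zero]
    have h1 : 0 < K' * (K' * C ^ α) ^ (γ / (1 - γ)) := by positivity
    have h2 : 0 < t ^ (γ * (α * l + β) / (1 - γ)) := Real.rpow_pos_of_pos ht0 _
    positivity
  obtain ⟨u, σ, hu0, hult, hXu, hσpm, hσXt, hexc⟩ := excursion_lemma X hXc hX0 ht0 ht1 hXt
  have hσσ : σ * σ = 1 := by rcases hσpm with h | h <;> rw [h] <;> ring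
  have habsσ : |σ| = 1 := by rcases hσpm with h | h <;> rw [h] <;> norm_num
  set e : ℝ := α * l + β with he_def
  set ct : ℝ := C ^ (-α) * t ^ (-e) with hct_def
  have hct0 : 0 < ct := by
    have := Real.rpow_pos_of_pos hC (-α)
    have := Real.rpow_pos_of_pos ht0 (-e)
    positivity
  -- interval integrability
  have hsubt : Set.uIcc (0:ℝ) t ⊆ Set.Icc 0 1 := by
    rw [Set.uIcc_of_le ht0.le]; exact Set.Icc_subset_Icc le_rfl ht1
  have hsubu : Set.uIcc (0:ℝ) u ⊆ Set.Icc 0 1 := by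
    rw [Set.uIcc_of_le hu0]; exact Set.Icc_subset_Icc le_rfl ((hult.le.trans htε).trans hε1)
  have hiv0t : IntervalIntegrable g volume 0 t := (hgi.mono_set hsubt).intervalIntegrable
  have hiv0u : IntervalIntegrable g volume 0 u := (hgi.mono_set hsubu).intervalIntegrable
  have hgsub : IntegrableOn g (Set.Ioc u t) :=
    hgi.mono_set (fun s hs => ⟨hu0.trans hs.1.le, hs.2.trans ht1⟩)
  -- integral identity
  have hsum : (∫ s in Set.Ioc u t, g s) = f t - f u - X t := by
    have h1 := intervalIntegral.integral_interval_sub_left hiv0t hiv0u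
    rw [hIg t ⟨ht0.le, ht1⟩, hIg u ⟨hu0, (hult.le.trans htε).trans hε1⟩] at h1
    rw [← intervalIntegral.integral_of_le hult.le, ← h1, hXu]
    ring
  -- pointwise lower bound on σ * g
  have hpt : ∀ s ∈ Set.Ioc u t, ct ≤ σ * g s := by
    intro s hs
    have hs0 : 0 < s := lt_of_le_of_lt hu0 hs.1
    have hst : s ≤ t := hs.2
    have hsε : s ∈ Set.Ioc (0:ℝ) ε := ⟨hs0, hst.trans htε⟩
    obtain ⟨hXs_ne, hsgn⟩ := hexc s hs
    have hXs_pos : 0 < |X s| := abs_pos.mpr hXs_ne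
    have hXs_half : |X s| ≤ 1/2 := hhalf s ⟨hs0.le, hsε.2⟩
    have hind : (if 0 < |X s| ∧ |X s| < 1 then (1:ℝ) else 0) = 1 :=
      if_pos ⟨hXs_pos, lt_of_le_of_lt hXs_half (by norm_num)⟩
    have hind2 : (if X s = 0 ∧ 0 < s then s ^ (-2:ℝ) else 0) = 0 :=
      if_neg (fun h => hXs_ne h.1)
    have hσg : σ * g s = |X s| ^ (-α) * s ^ (-β) := by
      rw [hg_def s, hsgn, hind, hind2]
      have : σ * (σ * |X s| ^ (-α) * 1 * s ^ (-β) + 0)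
          = σ * σ * (|X s| ^ (-α) * s ^ (-β)) := by ring
      rw [this, hσσ, one_mul]
    rw [hσg]
    -- ct = C^(-α) * t^(-e) ≤ |X s|^(-α) * s^(-β)
    have hXb : |X s| ≤ C * s ^ l := hb s hsε
    have hs_l_pos : (0:ℝ) < C * s ^ l := lt_of_lt_of_le hXs_pos hXb
    have step1 : (C * s ^ l) ^ (-α) ≤ |X s| ^ (-α) :=
      Real.rpow_le_rpow_of_nonpos hXs_pos hXb (by linarith)
    have step2 : (C * s ^ l) ^ (-α) = C ^ (-α) * s ^ (l * -α) := by
      rw [Real.mul_rpow hC.le (Real.rpow_nonneg hs0.le l), ← Real.rpow_mul hs0.le]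
    have step3 : t ^ (l * -α) ≤ s ^ (l * -α) := by
      apply Real.rpow_le_rpow_of_nonpos hs0 hst
      have : 0 ≤ l * α := mul_nonneg hl hα.le
      nlinarith
    have step4 : t ^ (-β) ≤ s ^ (-β) :=
      Real.rpow_le_rpow_of_nonpos hs0 hst (by linarith)
    have hct_eq : ct = C ^ (-α) * (t ^ (l * -α) * t ^ (-β)) := by
      rw [hct_def, ← Real.rpow_add ht0, show l * -α + -β = -e by rw [he_def]; ring]
    rw [hct_eq]
    have hCα : 0 ≤ C ^ (-α) := (Real.rpow_pos_of_pos hC _).le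
    have h5 : t ^ (l * -α) * t ^ (-β) ≤ s ^ (l * -α) * s ^ (-β) := by
      apply mul_le_mul step3 step4 (Real.rpow_nonneg ht0.le _)
        (Real.rpow_nonneg hs0.le _)
    have h6 : C ^ (-α) * (t ^ (l * -α) * t ^ (-β)) ≤ C ^ (-α) * (s ^ (l * -α) * s ^ (-β)) :=
      mul_le_mul_of_nonneg_left h5 hCα
    refine h6.trans ?_
    calc C ^ (-α) * (s ^ (l * -α) * s ^ (-β))
        = (C ^ (-α) * s ^ (l * -α)) * s ^ (-β) := by ring
      _ ≤ |X s| ^ (-α) * s ^ (-β) := by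
          apply mul_le_mul_of_nonneg_right _ (Real.rpow_nonneg hs0.le _)
          rw [← step2]; exact step1
  -- integral bounds
  have hIlow : ct * (t - u) ≤ ∫ s in Set.Ioc u t, σ * g s := by
    have hconst : (∫ _ in Set.Ioc u t, ct) = (t - u) * ct := by
      rw [setIntegral_const, Real.volume_real_Ioc_of_le hult.le, smul_eq_mul]
    rw [mul_comm ct (t - u), ← hconst]
    exact setIntegral_mono_on
        (integrableOn_const measure_Ioc_lt_top.ne)
        (hgsub.const_mul σ) measurableSet_Ioc hpt
  have hImul : (∫ s in Set.Ioc u t, σ * g s) = σ * (f t - f u) - |X t| := by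
    rw [integral_const_mul, hsum, ← hσXt]
    ring
  have hf_bound : σ * (f t - f u) ≤ K' * (t - u) ^ γ := by
    have h1 : σ * (f t - f u) ≤ |f t - f u| := by
      calc σ * (f t - f u) ≤ |σ * (f t - f u)| := le_abs_self _
        _ = |f t - f u| := by rw [abs_mul, habsσ, one_mul]
    have h2 := hfH u ⟨hu0, (hult.le.trans htε).trans hε1⟩ t ⟨ht0.le, ht1⟩
    rw [abs_of_nonneg (by linarith : (0:ℝ) ≤ t - u)] at h2
    linarith
  set d : ℝ := t - u with hd_def
  have hd0 : 0 < d := by rw [hd_def]; linarith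
  have hXt_bound : |X t| ≤ K' * d ^ γ := by
    have h0 : 0 ≤ ct * d := by positivity
    nlinarith [hIlow, hImul, hf_bound]
  have hctd : ct * d ≤ K' * d ^ γ := by
    nlinarith [hIlow, hImul, hf_bound, abs_nonneg (X t)]
  -- d^(1-γ) ≤ K' * C^α * t^e
  have hdsplit : d = d ^ γ * d ^ (1 - γ) := by
    rw [← Real.rpow_add hd0, show γ + (1 - γ) = 1 by ring, Real.rpow_one]
  have hkey : ct * d ^ (1 - γ) ≤ K' := by
    have hdγ : 0 < d ^ γ := Real.rpow_pos_of_pos hd0 γ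
    have : (ct * d ^ (1 - γ)) * d ^ γ ≤ K' * d ^ γ := by
      calc (ct * d ^ (1 - γ)) * d ^ γ = ct * (d ^ γ * d ^ (1 - γ)) := by ring
        _ = ct * d := by rw [← hdsplit]
        _ ≤ K' * d ^ γ := hctd
    exact le_of_mul_le_mul_right this hdγ
  have hctinv : ct⁻¹ = C ^ α * t ^ e := by
    rw [hct_def, mul_inv, ← Real.rpow_neg hC.le, ← Real.rpow_neg ht0.le, neg_neg, neg_neg]
  have hd1γ : d ^ (1 - γ) ≤ K' * (C ^ α * t ^ e) := by
    rw [← hctinv]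
    have h2 := mul_le_mul_of_nonneg_left hkey (le_of_lt (inv_pos.mpr hct0))
    calc d ^ (1 - γ) = ct⁻¹ * (ct * d ^ (1 - γ)) := by
          rw [← mul_assoc, inv_mul_cancel₀ (ne_of_gt hct0), one_mul]
      _ ≤ ct⁻¹ * K' := h2
      _ = K' * ct⁻¹ := mul_comm _ _
  -- conclude
  have hexp : 0 ≤ γ / (1 - γ) := by positivity
  have hfin : d ^ γ ≤ (K' * (C ^ α * t ^ e)) ^ (γ / (1 - γ)) := by
    have h1 : d ^ γ = (d ^ (1 - γ)) ^ (γ / (1 - γ)) := by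
      rw [← Real.rpow_mul hd0.le, show (1 - γ) * (γ / (1 - γ)) = γ by
        rw [mul_comm, div_mul_cancel₀ _ (ne_of_gt h1γ)]]
    rw [h1]
    exact Real.rpow_le_rpow (Real.rpow_nonneg hd0.le _) hd1γ hexp
  have hrhs : (K' * (C ^ α * t ^ e)) ^ (γ / (1 - γ))
      = (K' * C ^ α) ^ (γ / (1 - γ)) * t ^ (γ * (α * l + β) / (1 - γ)) := by
    rw [show K' * (C ^ α * t ^ e) = (K' * C ^ α) * t ^ e by ring]
    rw [Real.mul_rpow (by positivity) (Real.rpow_nonneg ht0.le _), ← Real.rpow_mul ht0.le]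
    congr 1
    rw [he_def]; ring
  calc |X t| ≤ K' * d ^ γ := hXt_bound
    _ ≤ K' * ((K' * C ^ α) ^ (γ / (1 - γ)) * t ^ (γ * (α * l + β) / (1 - γ))) := by
        rw [← hrhs]; exact mul_le_mul_of_nonneg_left hfin hK'.le
    _ = (K' * (K' * C ^ α) ^ (γ / (1 - γ))) * t ^ (γ * (α * l + β) / (1 - γ)) := by
        rw [mul_assoc]


set_option maxHeartbeats 1000000 in
theorem stmt1 (α β γ K : ℝ) (hα : 0 < α) (hβ : 0 < β) (hγ0 : 0 < γ) (hγ1 : γ < 1)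
    (hK : 0 ≤ K)
    (hcond : α * γ + β * (1 - γ) > 1 - γ)
    (X f : ℝ → ℝ)
    (hXc : ContinuousOn X (Set.Icc 0 1))
    (hX0 : X 0 = 0) (hf0 : f 0 = 0)
    (hfHolder : ∀ s ∈ Set.Icc (0:ℝ) 1, ∀ t ∈ Set.Icc (0:ℝ) 1,
      |f t - f s| ≤ K * |t - s| ^ γ)
    (hint : IntegrableOn
      (fun s => |X s| ^ (-α) * (if 0 < |X s| ∧ |X s| < 1 then (1:ℝ) else 0) * s ^ (-β)
        + (if X s = 0 ∧ 0 < s then s ^ (-2 : ℝ) else 0)) (Set.Icc 0 1))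
    (heq : ∀ t ∈ Set.Icc (0:ℝ) 1,
      X t = -(∫ s in (0:ℝ)..t,
          (Real.sign (X s) * |X s| ^ (-α) * (if 0 < |X s| ∧ |X s| < 1 then (1:ℝ) else 0) * s ^ (-β)
            + (if X s = 0 ∧ 0 < s then s ^ (-2 : ℝ) else 0)))
        + f t) :
    False := by
  have h1γ : 0 < 1 - γ := by linarith
  set H : ℝ → ℝ := fun s => |X s| ^ (-α) * (if 0 < |X s| ∧ |X s| < 1 then (1:ℝ) else 0) * s ^ (-β)
        + (if X s = 0 ∧ 0 < s then s ^ (-2 : ℝ) else 0) with hH_def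
  set g : ℝ → ℝ := fun s =>
      Real.sign (X s) * |X s| ^ (-α) * (if 0 < |X s| ∧ |X s| < 1 then (1:ℝ) else 0) * s ^ (-β)
            + (if X s = 0 ∧ 0 < s then s ^ (-2 : ℝ) else 0) with hg_def
  have hg_def' : ∀ s, g s = Real.sign (X s) * |X s| ^ (-α) *
      (if 0 < |X s| ∧ |X s| < 1 then (1:ℝ) else 0) * s ^ (-β)
      + (if X s = 0 ∧ 0 < s then s ^ (-2:ℝ) else 0) := fun s => by rw [hg_def]
  have hH_def' : ∀ s, H s = |X s| ^ (-α) *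
      (if 0 < |X s| ∧ |X s| < 1 then (1:ℝ) else 0) * s ^ (-β)
      + (if X s = 0 ∧ 0 < s then s ^ (-2:ℝ) else 0) := fun s => by rw [hH_def]
  -- Hölder with positive constant
  set K' : ℝ := K + 1 with hK'_def
  have hK' : 0 < K' := by rw [hK'_def]; linarith
  have hfH : ∀ s ∈ Set.Icc (0:ℝ) 1, ∀ t ∈ Set.Icc (0:ℝ) 1, |f t - f s| ≤ K' * |t - s| ^ γ := by
    intro s hs t ht
    have h1 := hfHolder s hs t ht
    have h2 : 0 ≤ |t - s| ^ γ := Real.rpow_nonneg (abs_nonneg _) _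
    nlinarith
  -- the basic integral identity
  have hIg : ∀ t ∈ Set.Icc (0:ℝ) 1, (∫ s in (0:ℝ)..t, g s) = f t - X t := by
    intro t ht
    have := heq t ht
    linarith
  -- measurability of g
  have hXm : AEMeasurable X (volume.restrict (Set.Icc 0 1)) :=
    hXc.aemeasurable measurableSet_Icc
  have hHm : AEMeasurable H (volume.restrict (Set.Icc 0 1)) :=
    hint.aestronglyMeasurable.aemeasurable
  have hg_eq : g = fun s => Real.sign (X s) * H s
      + (if X s = 0 then (1:ℝ) else 0) * (if 0 < s then s ^ (-2:ℝ) else 0) := by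
    funext s
    rw [hg_def', hH_def']
    by_cases hx : X s = 0
    · simp [hx, Real.sign_zero, abs_zero, lt_irrefl]
    · have h1 : (if X s = 0 ∧ 0 < s then s ^ (-2:ℝ) else 0) = 0 := if_neg (fun h => hx h.1)
      have h2 : (if X s = 0 then (1:ℝ) else 0) = 0 := if_neg hx
      rw [h1, h2]
      ring
  have hgm : AEStronglyMeasurable g (volume.restrict (Set.Icc 0 1)) := by
    rw [hg_eq]
    have m1 : AEMeasurable (fun s => Real.sign (X s)) (volume.restrict (Set.Icc 0 1)) :=
      measurable_real_sign.comp_aemeasurable hXm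
    have m2 : AEMeasurable (fun s => if X s = 0 then (1:ℝ) else 0)
        (volume.restrict (Set.Icc 0 1)) := by
      have : Measurable (fun x : ℝ => if x = 0 then (1:ℝ) else 0) :=
        Measurable.ite (measurableSet_singleton 0) measurable_const measurable_const
      exact this.comp_aemeasurable hXm
    have m3 : Measurable (fun s : ℝ => if 0 < s then s ^ (-2:ℝ) else 0) :=
      Measurable.ite (measurableSet_lt measurable_const measurable_id)
        (measurable_id.pow measurable_const) measurable_const
    exact ((m1.mul hHm).add (m2.mul m3.aemeasurable)).aestronglyMeasurable
  -- integrability of g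
  have hbound : ∀ s ∈ Set.Icc (0:ℝ) 1, ‖g s‖ ≤ H s := by
    intro s hs
    rw [Real.norm_eq_abs, hg_def', hH_def']
    have hsign : |Real.sign (X s)| ≤ 1 := by
      rcases Real.sign_apply_eq (X s) with h | h | h <;> rw [h] <;> norm_num
    have habsα : 0 ≤ |X s| ^ (-α) := Real.rpow_nonneg (abs_nonneg _) _
    have hind0 : 0 ≤ (if 0 < |X s| ∧ |X s| < 1 then (1:ℝ) else 0) := by
      split <;> norm_num
    have hsβ : 0 ≤ s ^ (-β) := Real.rpow_nonneg hs.1 _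
    have ht2 : 0 ≤ (if X s = 0 ∧ 0 < s then s ^ (-2:ℝ) else 0) := by
      split
      · exact Real.rpow_nonneg hs.1 _
      · exact le_rfl
    set A := Real.sign (X s) * |X s| ^ (-α) * (if 0 < |X s| ∧ |X s| < 1 then (1:ℝ) else 0)
      * s ^ (-β) with hA
    set B := (if X s = 0 ∧ 0 < s then s ^ (-2:ℝ) else 0) with hB
    have hAle : |A| ≤ |X s| ^ (-α) * (if 0 < |X s| ∧ |X s| < 1 then (1:ℝ) else 0) * s ^ (-β) := by
      rw [hA, abs_mul, abs_mul, abs_mul, abs_of_nonneg habsα, abs_of_nonneg hind0,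
        abs_of_nonneg hsβ]
      nlinarith [mul_nonneg (sub_nonneg.mpr hsign)
        (mul_nonneg (mul_nonneg habsα hind0) hsβ)]
    calc |A + B| ≤ |A| + |B| := abs_add_le _ _
      _ ≤ |X s| ^ (-α) * (if 0 < |X s| ∧ |X s| < 1 then (1:ℝ) else 0) * s ^ (-β) + B := by
          rw [abs_of_nonneg ht2]
          exact add_le_add_left hAle _
  have hgi : IntegrableOn g (Set.Icc 0 1) := by
    refine hint.mono' hgm ?_
    filter_upwards [ae_restrict_mem measurableSet_Icc] with s hs
    exact hbound s hs
  -- smallness neighborhood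
  have hc0 : ContinuousWithinAt X (Set.Icc 0 1) 0 := hXc 0 ⟨le_rfl, zero_le_one⟩
  obtain ⟨δ, hδ0, hδ⟩ := Metric.continuousWithinAt_iff.mp hc0 (1/2) (by norm_num)
  set ε : ℝ := min (δ/2) 1 with hε_def
  have hε0 : 0 < ε := lt_min (by linarith) one_pos
  have hε1 : ε ≤ 1 := min_le_right _ _
  have hhalf : ∀ s ∈ Set.Icc (0:ℝ) ε, |X s| ≤ 1/2 := by
    intro s hs
    have hs1 : s ∈ Set.Icc (0:ℝ) 1 := ⟨hs.1, hs.2.trans hε1⟩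
    have hdist : dist s 0 < δ := by
      rw [Real.dist_eq, sub_zero, abs_of_nonneg hs.1]
      have : s ≤ δ/2 := hs.2.trans (min_le_left _ _)
      linarith
    have := hδ hs1 hdist
    rw [hX0, Real.dist_eq, sub_zero] at this
    exact this.le
  -- bootstrap
  set P : ℝ → Prop := fun l => ∃ C, 0 < C ∧ ∀ s ∈ Set.Ioc (0:ℝ) ε, |X s| ≤ C * s ^ l with hP_def
  have h0 : P 0 := by
    refine ⟨1, one_pos, fun s hs => ?_⟩
    rw [Real.rpow_zero, mul_one]
    exact (hhalf s ⟨hs.1.le, hs.2⟩).trans (by norm_num)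
  have hstep : ∀ l, 0 ≤ l → P l → P (γ * (α * l + β) / (1 - γ)) := by
    rintro l hl ⟨C, hC, hb⟩
    refine ⟨K' * (K' * C ^ α) ^ (γ / (1 - γ)), ?_, ?_⟩
    · have := Real.rpow_pos_of_pos (show (0:ℝ) < K' * C ^ α by positivity) (γ / (1 - γ))
      positivity
    · exact step_lemma α β γ K' hα hβ hγ0 hγ1 hK' X f hXc hX0 hfH g hg_def' hgi hIg
        ε hε0 hε1 hhalf C l hC hl hb
  obtain ⟨l, hl0, ⟨C, hC, hCb⟩, hl1⟩ :=
    reach_lemma α β γ hα hβ hγ0 hγ1 hcond P h0 hstep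
  -- endgame: non-integrability
  set ρ : ℝ := min (α * l + β) 2 with hρ_def
  have hρ1 : 1 < ρ := lt_min hl1 one_lt_two
  have hρ2 : ρ ≤ 2 := min_le_right _ _
  have hρe : ρ ≤ α * l + β := min_le_left _ _
  set c0 : ℝ := min (C ^ (-α)) 1 with hc0_def
  have hc00 : 0 < c0 := lt_min (Real.rpow_pos_of_pos hC _) one_pos
  have claim : ∀ s ∈ Set.Ioc (0:ℝ) ε, c0 * s ^ (-ρ) ≤ H s := by
    intro s hs
    have hs0 : 0 < s := hs.1
    have hs1 : s ≤ 1 := hs.2.trans hε1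
    rw [hH_def']
    by_cases hx : X s = 0
    · have h1 : (if 0 < |X s| ∧ |X s| < 1 then (1:ℝ) else 0) = 0 := by
        rw [hx, abs_zero]; exact if_neg (fun h => lt_irrefl 0 h.1)
      have h2 : (if X s = 0 ∧ 0 < s then s ^ (-2:ℝ) else 0) = s ^ (-2:ℝ) := if_pos ⟨hx, hs0⟩
      rw [h1, h2, mul_zero, zero_mul, zero_add]
      have h3 : s ^ (-ρ) ≤ s ^ (-2:ℝ) :=
        Real.rpow_le_rpow_of_exponent_ge hs0 hs1 (by linarith)
      have h4 : c0 ≤ 1 := min_le_right _ _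
      nlinarith [Real.rpow_nonneg hs0.le (-ρ)]
    · have hXpos : 0 < |X s| := abs_pos.mpr hx
      have h1 : (if 0 < |X s| ∧ |X s| < 1 then (1:ℝ) else 0) = 1 := by
        refine if_pos ⟨hXpos, ?_⟩
        exact lt_of_le_of_lt (hhalf s ⟨hs0.le, hs.2⟩) (by norm_num)
      have h2 : (if X s = 0 ∧ 0 < s then s ^ (-2:ℝ) else 0) = 0 := if_neg (fun h => hx h.1)
      rw [h1, h2, mul_one, add_zero]
      have hXb : |X s| ≤ C * s ^ l := hCb s hs
      have step1 : (C * s ^ l) ^ (-α) ≤ |X s| ^ (-α) :=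
        Real.rpow_le_rpow_of_nonpos hXpos hXb (by linarith)
      have step2 : (C * s ^ l) ^ (-α) = C ^ (-α) * s ^ (l * -α) := by
        rw [Real.mul_rpow hC.le (Real.rpow_nonneg hs0.le l), ← Real.rpow_mul hs0.le]
      have step3 : c0 * s ^ (-ρ) ≤ C ^ (-α) * (s ^ (l * -α) * s ^ (-β)) := by
        rw [← Real.rpow_add hs0]
        have hexp : l * -α + -β ≤ -ρ := by nlinarith
        have h5 : s ^ (-ρ) ≤ s ^ (l * -α + -β) :=
          Real.rpow_le_rpow_of_exponent_ge hs0 hs1 hexp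
        have h6 : c0 ≤ C ^ (-α) := min_le_left _ _
        have h7 : 0 ≤ C ^ (-α) := (Real.rpow_pos_of_pos hC _).le
        calc c0 * s ^ (-ρ) ≤ C ^ (-α) * s ^ (-ρ) :=
              mul_le_mul_of_nonneg_right h6 (Real.rpow_nonneg hs0.le _)
          _ ≤ C ^ (-α) * s ^ (l * -α + -β) := mul_le_mul_of_nonneg_left h5 h7
      refine step3.trans ?_
      have h8 : 0 ≤ s ^ (-β) := Real.rpow_nonneg hs0.le _
      calc C ^ (-α) * (s ^ (l * -α) * s ^ (-β)) = (C ^ (-α) * s ^ (l * -α)) * s ^ (-β) := by ring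
        _ ≤ |X s| ^ (-α) * s ^ (-β) := by
            apply mul_le_mul_of_nonneg_right _ h8
            rw [← step2]; exact step1
  -- contradiction with integrability
  have hsub : Set.Ioc (0:ℝ) ε ⊆ Set.Icc 0 1 := fun s hs => ⟨hs.1.le, hs.2.trans hε1⟩
  have hHint : IntegrableOn H (Set.Ioc 0 ε) := hint.mono_set hsub
  have hmeasρ : AEStronglyMeasurable (fun s : ℝ => c0 * s ^ (-ρ))
      (volume.restrict (Set.Ioc 0 ε)) :=
    ((measurable_id.pow measurable_const).const_mul c0).aestronglyMeasurable
  have hmono : IntegrableOn (fun s => c0 * s ^ (-ρ)) (Set.Ioc 0 ε) := by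
    refine hHint.mono' hmeasρ ?_
    filter_upwards [ae_restrict_mem measurableSet_Ioc] with s hs
    rw [Real.norm_eq_abs,
      abs_of_nonneg (mul_nonneg hc00.le (Real.rpow_nonneg hs.1.le _))]
    exact claim s hs
  have hmono2 : IntegrableOn (fun s : ℝ => s ^ (-ρ)) (Set.Ioc 0 ε) := by
    have h3 : IntegrableOn (fun x : ℝ => c0⁻¹ * (c0 * x ^ (-ρ))) (Set.Ioc 0 ε) :=
      hmono.const_mul c0⁻¹
    refine h3.congr_fun (fun s _ => ?_) measurableSet_Ioc
    show c0⁻¹ * (c0 * s ^ (-ρ)) = s ^ (-ρ)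
    rw [← mul_assoc, inv_mul_cancel₀ (ne_of_gt hc00), one_mul]
  have hmono3 : IntegrableOn (fun s : ℝ => s ^ (-ρ)) (Set.Ioo 0 ε) :=
    hmono2.mono_set Set.Ioo_subset_Ioc_self
  rw [intervalIntegral.integrableOn_Ioo_rpow_iff hε0] at hmono3
  linarith
end

section
/- Taming singularities lemma: Let (E,d) be a metric space, T > 0, and let τ₁ > η₁ ≥ 0, τ₂ > η₂ ≥ 0, Γ₁, Γ₂ > 0. Suppose Y : (0,T] → E is continuous and satisfies d(Y_s, Y_t) ≤ Γ₁ s^(−η₁)(t−s)^{τ₁} + Γ₂ s^(−η₂)(t−s)^{τ₂} for all 0 < s ≤ t ≤ T. Then there exists a constant C depending only on τ₁, η₁, τ₂, η₂, T such that d(Y_s, Y_t) ≤ C(Γ₁ (t−s)^{τ₁−η₁} + Γ₂ (t−s)^{τ₂−η₂}) for all 0 ≤ s ≤ t ≤ T, where Y_0 is defined as the limit of Y_s as s → 0 (which exists). -/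
universe u
set_option maxHeartbeats 1000000

lemma aux_sing7 {η τ s t : ℝ} (hη : 0 ≤ η) (hτ : η < τ) (hs : 0 < s) (hst : s ≤ t)
    (h2 : t - s ≤ s) : s ^ (-η) * (t - s) ^ τ ≤ (t - s) ^ (τ - η) := by
  rcases eq_or_lt_of_le (sub_nonneg.2 hst) with h | h
  · rw [← h, Real.zero_rpow (by linarith), Real.zero_rpow (by linarith), mul_zero]
  · have h1 : (t - s) ^ τ = (t - s) ^ (τ - η) * (t - s) ^ η := by
      rw [← Real.rpow_add h]; congr 1; ring
    have h3 : (t - s) ^ η ≤ s ^ η := Real.rpow_le_rpow h.le h2 hη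
    have h4 : s ^ (-η) = (s ^ η)⁻¹ := Real.rpow_neg hs.le η
    have h5 : (0:ℝ) < s ^ η := Real.rpow_pos_of_pos hs η
    calc s ^ (-η) * (t - s) ^ τ = (t - s) ^ (τ - η) * ((t - s) ^ η / s ^ η) := by
          rw [h1, h4]; ring
      _ ≤ (t - s) ^ (τ - η) * 1 :=
          mul_le_mul_of_nonneg_left (by rw [div_le_one h5]; exact h3)
            (Real.rpow_nonneg h.le _)
      _ = (t - s) ^ (τ - η) := mul_one _

theorem stmt7 (T τ₁ η₁ τ₂ η₂ : ℝ) (hT : 0 < T)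
    (hη₁ : 0 ≤ η₁) (hτ₁ : η₁ < τ₁) (hη₂ : 0 ≤ η₂) (hτ₂ : η₂ < τ₂) :
    ∃ C : ℝ, 0 < C ∧
      ∀ (E : Type u) [MetricSpace E] [CompleteSpace E] (Y : ℝ → E) (Γ₁ Γ₂ : ℝ),
        0 < Γ₁ → 0 < Γ₂ →
        ContinuousOn Y (Set.Ioc 0 T) →
        (∀ s t : ℝ, 0 < s → s ≤ t → t ≤ T →
          dist (Y s) (Y t) ≤ Γ₁ * s ^ (-η₁) * (t - s) ^ τ₁ + Γ₂ * s ^ (-η₂) * (t - s) ^ τ₂) →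
        ∃ Y₀ : E, Filter.Tendsto Y (nhdsWithin 0 (Set.Ioc 0 T)) (nhds Y₀) ∧
          ∀ s t : ℝ, 0 ≤ s → s ≤ t → t ≤ T →
            dist (if s = 0 then Y₀ else Y s) (if t = 0 then Y₀ else Y t) ≤
              C * (Γ₁ * (t - s) ^ (τ₁ - η₁) + Γ₂ * (t - s) ^ (τ₂ - η₂)) := by
  set a₁ := τ₁ - η₁ with ha₁def
  set a₂ := τ₂ - η₂ with ha₂def
  have ha₁ : 0 < a₁ := sub_pos.2 hτ₁
  have ha₂ : 0 < a₂ := sub_pos.2 hτ₂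
  set r₁ : ℝ := 2 ^ (-a₁) with hr₁def
  set r₂ : ℝ := 2 ^ (-a₂) with hr₂def
  have hr₁pos : 0 < r₁ := Real.rpow_pos_of_pos two_pos _
  have hr₂pos : 0 < r₂ := Real.rpow_pos_of_pos two_pos _
  have hr₁lt : r₁ < 1 := Real.rpow_lt_one_of_one_lt_of_neg one_lt_two (by linarith)
  have hr₂lt : r₂ < 1 := Real.rpow_lt_one_of_one_lt_of_neg one_lt_two (by linarith)
  set c₁ : ℝ := (1 - r₁)⁻¹ with hc₁def
  set c₂ : ℝ := (1 - r₂)⁻¹ with hc₂def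
  have hc₁pos : 0 < c₁ := inv_pos.2 (by linarith)
  have hc₂pos : 0 < c₂ := inv_pos.2 (by linarith)
  have hc₁mul : c₁ * (1 - r₁) = 1 := inv_mul_cancel₀ (by linarith)
  have hc₂mul : c₂ * (1 - r₂) = 1 := inv_mul_cancel₀ (by linarith)
  have hcr₁ : 0 ≤ c₁ * r₁ := (mul_pos hc₁pos hr₁pos).le
  have hcr₂ : 0 ≤ c₂ * r₂ := (mul_pos hc₂pos hr₂pos).le
  have hc₁one : 1 ≤ c₁ := one_le_inv₀ (by linarith) |>.mpr (by linarith)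
  have hc₂one : 1 ≤ c₂ := one_le_inv₀ (by linarith) |>.mpr (by linarith)
  have hkey₁ : (c₁ + 1) * r₁ ≤ c₁ := by linarith [hc₁mul, hr₁lt]
  have hkey₂ : (c₂ + 1) * r₂ ≤ c₂ := by linarith [hc₂mul, hr₂lt]
  have h2a₁pos : (0:ℝ) < 2 ^ a₁ := Real.rpow_pos_of_pos two_pos _
  have h2a₂pos : (0:ℝ) < 2 ^ a₂ := Real.rpow_pos_of_pos two_pos _
  have hp₁ : (0:ℝ) < c₁ * 2 ^ a₁ := mul_pos hc₁pos h2a₁pos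
  have hp₂ : (0:ℝ) < c₂ * 2 ^ a₂ := mul_pos hc₂pos h2a₂pos
  refine ⟨c₁ * 2 ^ a₁ + c₂ * 2 ^ a₂ + 1, by linarith, ?_⟩
  set C : ℝ := c₁ * 2 ^ a₁ + c₂ * 2 ^ a₂ + 1 with hCdef
  have hCpos : 0 < C := by rw [hCdef]; linarith
  have hCone : 1 ≤ C := by rw [hCdef]; linarith
  have hC₁ : c₁ * 2 ^ a₁ ≤ C := by rw [hCdef]; linarith
  have hC₂ : c₂ * 2 ^ a₂ ≤ C := by rw [hCdef]; linarith
  intro E _ _ Y Γ₁ Γ₂ hΓ₁ hΓ₂ hcont hbound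
  -- the main chaining estimate
  have key : ∀ n : ℕ, ∀ s t : ℝ, 0 < s → s ≤ t → t ≤ T → t ≤ 2 ^ n * s →
      dist (Y s) (Y t) ≤ c₁ * Γ₁ * t ^ a₁ + c₂ * Γ₂ * t ^ a₂ := by
    intro n
    induction n with
    | zero =>
      intro s t hs hst htT hle
      have hts : t = s := le_antisymm (by rw [pow_zero, one_mul] at hle; exact hle) hst
      subst hts
      have ht₁ : (0:ℝ) ≤ c₁ * Γ₁ * t ^ a₁ :=
        mul_nonneg (mul_nonneg hc₁pos.le hΓ₁.le) (Real.rpow_nonneg (by linarith) _)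
      have ht₂ : (0:ℝ) ≤ c₂ * Γ₂ * t ^ a₂ :=
        mul_nonneg (mul_nonneg hc₂pos.le hΓ₂.le) (Real.rpow_nonneg (by linarith) _)
      rw [dist_self]
      linarith
    | succ n ih =>
      intro s t hs hst htT hle
      have ht0 : (0:ℝ) ≤ t := by linarith
      have hta₁ : (0:ℝ) ≤ Γ₁ * t ^ a₁ := mul_nonneg hΓ₁.le (Real.rpow_nonneg ht0 _)
      have hta₂ : (0:ℝ) ≤ Γ₂ * t ^ a₂ := mul_nonneg hΓ₂.le (Real.rpow_nonneg ht0 _)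
      have g₁ : Γ₁ * t ^ a₁ ≤ c₁ * Γ₁ * t ^ a₁ := by
        have h := mul_le_mul_of_nonneg_right hc₁one hta₁
        linarith
      have g₂ : Γ₂ * t ^ a₂ ≤ c₂ * Γ₂ * t ^ a₂ := by
        have h := mul_le_mul_of_nonneg_right hc₂one hta₂
        linarith
      by_cases h2 : t ≤ 2 * s
      · have hb := hbound s t hs hst htT
        have e₁ : Γ₁ * s ^ (-η₁) * (t - s) ^ τ₁ ≤ Γ₁ * (t - s) ^ a₁ := by
          rw [mul_assoc]
          exact mul_le_mul_of_nonneg_left (aux_sing7 hη₁ hτ₁ hs hst (by linarith)) hΓ₁.le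
        have e₂ : Γ₂ * s ^ (-η₂) * (t - s) ^ τ₂ ≤ Γ₂ * (t - s) ^ a₂ := by
          rw [mul_assoc]
          exact mul_le_mul_of_nonneg_left (aux_sing7 hη₂ hτ₂ hs hst (by linarith)) hΓ₂.le
        have f₁ : Γ₁ * (t - s) ^ a₁ ≤ Γ₁ * t ^ a₁ :=
          mul_le_mul_of_nonneg_left
            (Real.rpow_le_rpow (sub_nonneg.2 hst) (by linarith) ha₁.le) hΓ₁.le
        have f₂ : Γ₂ * (t - s) ^ a₂ ≤ Γ₂ * t ^ a₂ :=
          mul_le_mul_of_nonneg_left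
            (Real.rpow_le_rpow (sub_nonneg.2 hst) (by linarith) ha₂.le) hΓ₂.le
        linarith
      · push_neg at h2
        set m := t / 2 with hmdef
        have hm : 0 < m := by rw [hmdef]; linarith
        have hsm : s ≤ m := by rw [hmdef]; linarith
        have hmt : m ≤ t := by rw [hmdef]; linarith
        have hmT : m ≤ T := le_trans hmt htT
        have hm2 : m ≤ 2 ^ n * s := by
          rw [pow_succ] at hle
          rw [hmdef]; linarith
        have h1 := ih s m hs hsm hmT hm2
        have hb := hbound m t hm hmt htT
        have htm : t - m = m := by rw [hmdef]; ring
        have em₁ : m ^ (-η₁) * m ^ τ₁ = m ^ a₁ := by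
          rw [← Real.rpow_add hm]; congr 1; rw [ha₁def]; ring
        have em₂ : m ^ (-η₂) * m ^ τ₂ = m ^ a₂ := by
          rw [← Real.rpow_add hm]; congr 1; rw [ha₂def]; ring
        have hb' : dist (Y m) (Y t) ≤ Γ₁ * m ^ a₁ + Γ₂ * m ^ a₂ := by
          calc dist (Y m) (Y t)
              ≤ Γ₁ * m ^ (-η₁) * (t - m) ^ τ₁ + Γ₂ * m ^ (-η₂) * (t - m) ^ τ₂ := hb
            _ = Γ₁ * m ^ a₁ + Γ₂ * m ^ a₂ := by rw [htm, mul_assoc, mul_assoc, em₁, em₂]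
        have hma₁ : m ^ a₁ = r₁ * t ^ a₁ := by
          rw [hmdef, Real.div_rpow ht0 (by norm_num), hr₁def,
            Real.rpow_neg (by norm_num : (0:ℝ) ≤ 2)]
          ring
        have hma₂ : m ^ a₂ = r₂ * t ^ a₂ := by
          rw [hmdef, Real.div_rpow ht0 (by norm_num), hr₂def,
            Real.rpow_neg (by norm_num : (0:ℝ) ≤ 2)]
          ring
        have htri := dist_triangle (Y s) (Y m) (Y t)
        have comb₁ : (c₁ + 1) * (Γ₁ * (r₁ * t ^ a₁)) ≤ c₁ * (Γ₁ * t ^ a₁) := by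
          have h := mul_le_mul_of_nonneg_right hkey₁ hta₁
          linarith [h]
        have comb₂ : (c₂ + 1) * (Γ₂ * (r₂ * t ^ a₂)) ≤ c₂ * (Γ₂ * t ^ a₂) := by
          have h := mul_le_mul_of_nonneg_right hkey₂ hta₂
          linarith [h]
        rw [hma₁, hma₂] at h1 hb'
        linarith
  -- uniform bound on (0, T]
  have key2 : ∀ s t : ℝ, 0 < s → s ≤ t → t ≤ T →
      dist (Y s) (Y t) ≤ C * (Γ₁ * (t - s) ^ a₁ + Γ₂ * (t - s) ^ a₂) := by
    intro s t hs hst htT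
    have hts0 : (0:ℝ) ≤ t - s := sub_nonneg.2 hst
    have hy₁ : (0:ℝ) ≤ Γ₁ * (t - s) ^ a₁ := mul_nonneg hΓ₁.le (Real.rpow_nonneg hts0 _)
    have hy₂ : (0:ℝ) ≤ Γ₂ * (t - s) ^ a₂ := mul_nonneg hΓ₂.le (Real.rpow_nonneg hts0 _)
    by_cases h2 : t - s ≤ s
    · have hb := hbound s t hs hst htT
      have e₁ : Γ₁ * s ^ (-η₁) * (t - s) ^ τ₁ ≤ Γ₁ * (t - s) ^ a₁ := by
        rw [mul_assoc]
        exact mul_le_mul_of_nonneg_left (aux_sing7 hη₁ hτ₁ hs hst h2) hΓ₁.le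
      have e₂ : Γ₂ * s ^ (-η₂) * (t - s) ^ τ₂ ≤ Γ₂ * (t - s) ^ a₂ := by
        rw [mul_assoc]
        exact mul_le_mul_of_nonneg_left (aux_sing7 hη₂ hτ₂ hs hst h2) hΓ₂.le
      have hfin := mul_le_mul_of_nonneg_right hCone (add_nonneg hy₁ hy₂)
      linarith
    · push_neg at h2
      obtain ⟨n, hn⟩ := pow_unbounded_of_one_lt (t / s) one_lt_two
      have hle : t ≤ 2 ^ n * s := ((div_lt_iff₀ hs).mp hn).le
      have hk := key n s t hs hst htT hle
      have h2' : t ≤ 2 * (t - s) := by linarith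
      have ht₁ : t ^ a₁ ≤ 2 ^ a₁ * (t - s) ^ a₁ := by
        calc t ^ a₁ ≤ (2 * (t - s)) ^ a₁ :=
              Real.rpow_le_rpow (by linarith) h2' ha₁.le
          _ = 2 ^ a₁ * (t - s) ^ a₁ :=
              Real.mul_rpow (by norm_num) hts0
      have ht₂ : t ^ a₂ ≤ 2 ^ a₂ * (t - s) ^ a₂ := by
        calc t ^ a₂ ≤ (2 * (t - s)) ^ a₂ :=
              Real.rpow_le_rpow (by linarith) h2' ha₂.le
          _ = 2 ^ a₂ * (t - s) ^ a₂ :=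
              Real.mul_rpow (by norm_num) hts0
      have u₁ : c₁ * Γ₁ * t ^ a₁ ≤ C * (Γ₁ * (t - s) ^ a₁) := by
        calc c₁ * Γ₁ * t ^ a₁ ≤ c₁ * Γ₁ * (2 ^ a₁ * (t - s) ^ a₁) :=
              mul_le_mul_of_nonneg_left ht₁ (mul_nonneg hc₁pos.le hΓ₁.le)
          _ = (c₁ * 2 ^ a₁) * (Γ₁ * (t - s) ^ a₁) := by ring
          _ ≤ C * (Γ₁ * (t - s) ^ a₁) := mul_le_mul_of_nonneg_right hC₁ hy₁
      have u₂ : c₂ * Γ₂ * t ^ a₂ ≤ C * (Γ₂ * (t - s) ^ a₂) := by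
        calc c₂ * Γ₂ * t ^ a₂ ≤ c₂ * Γ₂ * (2 ^ a₂ * (t - s) ^ a₂) :=
              mul_le_mul_of_nonneg_left ht₂ (mul_nonneg hc₂pos.le hΓ₂.le)
          _ = (c₂ * 2 ^ a₂) * (Γ₂ * (t - s) ^ a₂) := by ring
          _ ≤ C * (Γ₂ * (t - s) ^ a₂) := mul_le_mul_of_nonneg_right hC₂ hy₂
      calc dist (Y s) (Y t) ≤ c₁ * Γ₁ * t ^ a₁ + c₂ * Γ₂ * t ^ a₂ := hk
        _ ≤ C * (Γ₁ * (t - s) ^ a₁) + C * (Γ₂ * (t - s) ^ a₂) := add_le_add u₁ u₂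
        _ = C * (Γ₁ * (t - s) ^ a₁ + Γ₂ * (t - s) ^ a₂) := by ring
  set l := nhdsWithin (0:ℝ) (Set.Ioc 0 T) with hldef
  have hlne : l.NeBot := by
    refine mem_closure_iff_nhdsWithin_neBot.mp ?_
    rw [closure_Ioc hT.ne]
    exact ⟨le_refl 0, hT.le⟩
  have hg : Filter.Tendsto (fun x : ℝ => C * (Γ₁ * x ^ a₁ + Γ₂ * x ^ a₂)) (nhds 0) (nhds 0) := by
    have t₁ : Filter.Tendsto (fun x : ℝ => x ^ a₁) (nhds 0) (nhds 0) := by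
      have := (Real.continuousAt_rpow_const 0 a₁ (Or.inr ha₁.le)).tendsto
      simpa [Real.zero_rpow ha₁.ne'] using this
    have t₂ : Filter.Tendsto (fun x : ℝ => x ^ a₂) (nhds 0) (nhds 0) := by
      have := (Real.continuousAt_rpow_const 0 a₂ (Or.inr ha₂.le)).tendsto
      simpa [Real.zero_rpow ha₂.ne'] using this
    have h := ((t₁.const_mul Γ₁).add (t₂.const_mul Γ₂)).const_mul C
    simpa using h
  have hcauchy : Cauchy (Filter.map Y l) := by
    rw [Metric.cauchy_iff]
    refine ⟨hlne.map Y, ?_⟩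
    intro ε hε
    have hpre := hg (Iio_mem_nhds hε)
    obtain ⟨δ, hδ, hδsub⟩ := Metric.mem_nhds_iff.mp hpre
    refine ⟨Y '' (Set.Ioc 0 T ∩ Metric.ball 0 δ), ?_, ?_⟩
    · apply Filter.image_mem_map
      exact Filter.inter_mem self_mem_nhdsWithin
        (mem_nhdsWithin_of_mem_nhds (Metric.ball_mem_nhds 0 hδ))
    · have main : ∀ u v : ℝ, u ∈ Set.Ioc 0 T ∩ Metric.ball 0 δ →
          v ∈ Set.Ioc 0 T ∩ Metric.ball 0 δ → u ≤ v → dist (Y u) (Y v) < ε := by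
        rintro u v ⟨⟨hu0, huT⟩, _⟩ ⟨⟨hv0, hvT⟩, hvb⟩ huv
        have hvδ : |v| < δ := by simpa [Real.dist_eq] using hvb
        have hd : |v - u| < δ := by
          rw [abs_of_nonneg (by linarith)]
          rw [abs_of_nonneg hv0.le] at hvδ
          linarith
        have hball : (v - u) ∈ Metric.ball (0:ℝ) δ := by
          simpa [Real.dist_eq] using hd
        have hlt : C * (Γ₁ * (v - u) ^ a₁ + Γ₂ * (v - u) ^ a₂) < ε := hδsub hball
        exact lt_of_le_of_lt (key2 u v hu0 huv hvT) hlt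
      rintro x ⟨u, hu, rfl⟩ y ⟨v, hv, rfl⟩
      rcases le_total u v with huv | hvu
      · exact main u v hu hv huv
      · rw [dist_comm]; exact main v u hv hu hvu
  obtain ⟨Y₀, hY₀⟩ := CompleteSpace.complete hcauchy
  have hY₀' : Filter.Tendsto Y l (nhds Y₀) := hY₀
  refine ⟨Y₀, hY₀', ?_⟩
  intro s t hs hst htT
  by_cases hs0 : s = 0
  · subst hs0
    by_cases ht0 : t = 0
    · subst ht0
      simp [Real.zero_rpow ha₁.ne', Real.zero_rpow ha₂.ne']
    · have htpos : 0 < t := lt_of_le_of_ne hst (Ne.symm ht0)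
      rw [if_pos rfl, if_neg ht0]
      have hev : ∀ᶠ u in l, dist (Y u) (Y t) ≤ C * (Γ₁ * t ^ a₁ + Γ₂ * t ^ a₂) := by
        filter_upwards [self_mem_nhdsWithin,
          mem_nhdsWithin_of_mem_nhds (Iio_mem_nhds htpos)] with u hu hut
        have hu0 : 0 < u := hu.1
        have hut' : u < t := hut
        have hk := key2 u t hu0 hut'.le htT
        have f₁ : (t - u) ^ a₁ ≤ t ^ a₁ :=
          Real.rpow_le_rpow (by linarith) (by linarith) ha₁.le
        have f₂ : (t - u) ^ a₂ ≤ t ^ a₂ :=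
          Real.rpow_le_rpow (by linarith) (by linarith) ha₂.le
        have hmono : C * (Γ₁ * (t - u) ^ a₁ + Γ₂ * (t - u) ^ a₂) ≤
            C * (Γ₁ * t ^ a₁ + Γ₂ * t ^ a₂) := by
          apply mul_le_mul_of_nonneg_left _ hCpos.le
          exact add_le_add (mul_le_mul_of_nonneg_left f₁ hΓ₁.le)
            (mul_le_mul_of_nonneg_left f₂ hΓ₂.le)
        linarith
      have hdlim : Filter.Tendsto (fun u => dist (Y u) (Y t)) l (nhds (dist Y₀ (Y t))) :=
        hY₀'.dist tendsto_const_nhds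
      have hfin := le_of_tendsto hdlim hev
      simpa using hfin
  · have hspos : 0 < s := lt_of_le_of_ne hs (Ne.symm hs0)
    have ht0 : t ≠ 0 := by intro h; rw [h] at hst; linarith
    rw [if_neg hs0, if_neg ht0]
    exact key2 s t hspos hst htT
end

section
/- For H ∈ (0, 1/2), d ∈ ℕ, ρ ∈ [1,∞), and 0 ≤ s < u ≤ t, one has ((t−s)^{2H} − (t−u)^{2H})^(−d/2) ≤ C((u−s)^(−Hd) + (u−s)^(−d/2)(t−u)^{d/2 − Hd}) for a constant C depending only on H and d. -/
theorem stmt10 (H : ℝ) (d : ℕ) (hH0 : 0 < H) (hH : H < 1 / 2) :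
    ∃ C : ℝ, 0 < C ∧ ∀ ρ : ℝ, 1 ≤ ρ → ∀ s u t : ℝ, 0 ≤ s → s < u → u ≤ t →
      ((t - s) ^ (2 * H) - (t - u) ^ (2 * H)) ^ (-(d : ℝ) / 2) ≤
        C * ((u - s) ^ (-(H * d)) +
          (u - s) ^ (-(d : ℝ) / 2) * (t - u) ^ ((d : ℝ) / 2 - H * d)) := by
  set q : ℝ := (d : ℝ) / 2 - H * d with hq
  have hq0 : 0 ≤ q := by
    have : (0:ℝ) ≤ (d:ℝ) * (1/2 - H) := by
      apply mul_nonneg (Nat.cast_nonneg d); linarith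
    rw [hq]; nlinarith
  refine ⟨(2 * H) ^ (-(d : ℝ) / 2) * 2 ^ q, by positivity, ?_⟩
  intro ρ hρ s u t hs hsu hut
  set a := u - s with ha'
  set b := t - u with hb'
  have ha : 0 < a := by simp [ha']; linarith
  have hb : 0 ≤ b := by simp [hb']; linarith
  have hab : 0 < a + b := by linarith
  have hts : t - s = a + b := by rw [ha', hb']; ring
  rw [hts]
  have hHp : (0:ℝ) ≤ 2 * H := by linarith
  have hHp1 : 2 * H ≤ 1 := by linarith
  -- Bernoulli step: (b/(a+b))^(2H) ≤ 1 + 2H * (b/(a+b) - 1)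
  have hx : -1 ≤ b / (a + b) - 1 := by
    have : 0 ≤ b / (a + b) := div_nonneg hb hab.le
    linarith
  have bern := rpow_one_add_le_one_add_mul_self hx hHp hHp1
  rw [add_sub_cancel] at bern
  -- multiply by (a+b)^(2H)
  have key : 2 * H * a * (a + b) ^ (2 * H - 1) ≤ (a + b) ^ (2 * H) - b ^ (2 * H) := by
    have hpow : (0:ℝ) < (a + b) ^ (2 * H) := Real.rpow_pos_of_pos hab _
    have h1 : (b / (a + b)) ^ (2 * H) * (a + b) ^ (2 * H) = b ^ (2 * H) := by
      rw [Real.div_rpow hb hab.le, div_mul_cancel₀ _ hpow.ne']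
    have h2 : (a + b) ^ (2 * H - 1) = (a + b) ^ (2 * H) / (a + b) := by
      rw [Real.rpow_sub hab, Real.rpow_one]
    have h3 : (1 + 2 * H * (b / (a + b) - 1)) * (a + b) ^ (2 * H)
        = (a + b) ^ (2 * H) - 2 * H * a * ((a + b) ^ (2 * H) / (a + b)) := by
      field_simp
      ring
    have h4 : (b / (a + b)) ^ (2 * H) * (a + b) ^ (2 * H)
        ≤ (1 + 2 * H * (b / (a + b) - 1)) * (a + b) ^ (2 * H) :=
      mul_le_mul_of_nonneg_right bern hpow.le
    rw [h1, h3] at h4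
    rw [h2]
    linarith
  have hL : 0 < 2 * H * a * (a + b) ^ (2 * H - 1) := by positivity
  have step2 : ((a + b) ^ (2 * H) - b ^ (2 * H)) ^ (-(d : ℝ) / 2)
      ≤ (2 * H * a * (a + b) ^ (2 * H - 1)) ^ (-(d : ℝ) / 2) :=
    Real.rpow_le_rpow_of_nonpos hL key
      (by have : (0:ℝ) ≤ (d:ℝ) := Nat.cast_nonneg d; linarith)
  -- expand the bound
  have expand : (2 * H * a * (a + b) ^ (2 * H - 1)) ^ (-(d : ℝ) / 2)
      = (2 * H) ^ (-(d : ℝ) / 2) * (a ^ (-(d : ℝ) / 2) * (a + b) ^ q) := by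
    rw [Real.mul_rpow (by positivity) (by positivity),
      Real.mul_rpow hHp ha.le, ← Real.rpow_mul hab.le,
      show (2 * H - 1) * (-(d : ℝ) / 2) = q by rw [hq]; ring]
    ring
  -- (a+b)^q ≤ 2^q * (a^q + b^q)
  have hmax : (a + b) ^ q ≤ 2 ^ q * (a ^ q + b ^ q) := by
    have h1 : a + b ≤ 2 * max a b := by
      rcases le_total a b with h | h
      · rw [max_eq_right h]; linarith
      · rw [max_eq_left h]; linarith
    have h2 : (a + b) ^ q ≤ (2 * max a b) ^ q :=
      Real.rpow_le_rpow hab.le h1 hq0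
    have h3 : (2 * max a b) ^ q = 2 ^ q * (max a b) ^ q :=
      Real.mul_rpow (by norm_num) (le_max_of_le_left ha.le)
    have h4 : (max a b) ^ q ≤ a ^ q + b ^ q := by
      rcases max_cases a b with ⟨hm, _⟩ | ⟨hm, _⟩ <;> rw [hm]
      · exact le_add_of_nonneg_right (Real.rpow_nonneg hb _)
      · exact le_add_of_nonneg_left (Real.rpow_nonneg ha.le _)
    calc (a + b) ^ q ≤ (2 * max a b) ^ q := h2
      _ = 2 ^ q * (max a b) ^ q := h3
      _ ≤ 2 ^ q * (a ^ q + b ^ q) := by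
          apply mul_le_mul_of_nonneg_left h4 (by positivity)
  have haq : a ^ (-(d : ℝ) / 2) * a ^ q = a ^ (-(H * d)) := by
    rw [← Real.rpow_add ha]
    congr 1
    rw [hq]; ring
  calc ((a + b) ^ (2 * H) - b ^ (2 * H)) ^ (-(d : ℝ) / 2)
      ≤ (2 * H) ^ (-(d : ℝ) / 2) * (a ^ (-(d : ℝ) / 2) * (a + b) ^ q) := by
        rw [← expand]; exact step2
    _ ≤ (2 * H) ^ (-(d : ℝ) / 2) * (a ^ (-(d : ℝ) / 2) * (2 ^ q * (a ^ q + b ^ q))) := by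
        apply mul_le_mul_of_nonneg_left _ (by positivity)
        exact mul_le_mul_of_nonneg_left hmax (by positivity)
    _ = (2 * H) ^ (-(d : ℝ) / 2) * 2 ^ q *
        (a ^ (-(H * d)) + a ^ (-(d : ℝ) / 2) * b ^ q) := by
        rw [← haq]; ring
end
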